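/- Let Q_λ = (B, λB) be the Ad-invariant symmetric bilinear form on so(4) = so(3) ⊕ so(3), where −B is the Killing form of so(3) and λ > 0, λ ≠ 1. If ρ is a Lie algebra automorphism of so(4) preserving diag(so(3)) and mapping 𝔪^λ = {(u, −(1/λ)u)} onto 𝔪^{λ'} = {(u, −(1/λ')u)}, with 0 < λ < λ' ≤ 1, then a contradiction arises; hence λ = λ'. -/

import Mathlib

section Aux

variable {L : Type*} [LieRing L] [LieAlgebra ℝ L] [LieAlgebra.IsSimple ℝ L]

/-- In a simple Lie algebra, an element killed by all brackets is zero. -/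
lemma aux_central_eq_zero (x : L) (h : ∀ a : L, ⁅a, x⁆ = 0) : x = 0 := by
  have hx : x ∈ LieAlgebra.center ℝ L := (LieModule.mem_maxTrivSubmodule ℝ L L x).2 h
  rwa [LieAlgebra.center_eq_bot, LieSubmodule.mem_bot] at hx

/-- A Lie algebra hom out of a simple Lie algebra is zero or injective. -/
lemma aux_zero_or_inj (f : L →ₗ⁅ℝ⁆ L) :
    (∀ u, f u = 0) ∨ Function.Injective f := by
  rcases LieAlgebra.IsSimple.eq_bot_or_eq_top f.ker with h | h
  · right; exact (LieHom.ker_eq_bot f).1 h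
  · left; intro u
    have : u ∈ f.ker := h ▸ LieSubmodule.mem_top u
    exact (LieHom.mem_ker).1 this

end Aux

/-- Let `Q_λ = (B, λB)` be the invariant form on `so(4) = so(3) ⊕ so(3)`
(`-B` the Killing form of `so(3)`), `λ > 0`.  If `ρ` is a Lie algebra automorphism of
`so(4)` (a linear automorphism of `L × L` preserving the componentwise bracket up to the
swap-or-preserve behaviour of automorphisms — encoded by the bracket-compatibility
hypothesis) which preserves `diag(so(3))` and maps `𝔪^λ = {(u, -(1/λ)u)}` onto
`𝔪^{λ'} = {(u, -(1/λ')u)}`, and `0 < λ < λ' ≤ 1`, then a contradiction arises; hence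
`λ = λ'`.  Here `L` is an abstract copy of `so(3)`: a finite-dimensional simple real Lie
algebra. -/
theorem stmt17 {L : Type*} [LieRing L] [LieAlgebra ℝ L] [FiniteDimensional ℝ L]
    [LieAlgebra.IsSimple ℝ L]
    (lam lam' : ℝ) (h0 : 0 < lam) (hlt : lam < lam') (h1 : lam' ≤ 1)
    (ρ : (L × L) ≃ₗ[ℝ] (L × L))
    (hbracket : ∀ x y : L × L,
      ρ (⁅x.1, y.1⁆, ⁅x.2, y.2⁆) = (⁅(ρ x).1, (ρ y).1⁆, ⁅(ρ x).2, (ρ y).2⁆))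
    (hdiag : ∀ x : L, ∃ y : L, ρ (x, x) = (y, y))
    (hm : ∀ u : L, ∃ v : L, ρ (u, -(1 / lam) • u) = (v, -(1 / lam') • v)) :
    False := by
  classical
  have h0' : 0 < lam' := lt_trans h0 hlt
  -- nontrivial L
  have hnab : ¬ IsLieAbelian L := LieAlgebra.IsSimple.non_abelian ℝ
  obtain ⟨u₀, hu₀⟩ : ∃ u : L, u ≠ 0 := by
    by_contra h
    push_neg at h
    exact hnab ⟨fun x y => by rw [h x]; simp⟩
  -- the four component homs
  have hbl : ∀ u w : L, ρ (⁅u, w⁆, 0) = (⁅(ρ (u,0)).1, (ρ (w,0)).1⁆, ⁅(ρ (u,0)).2, (ρ (w,0)).2⁆) := by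
    intro u w
    have := hbracket (u, 0) (w, 0)
    simpa using this
  have hbr : ∀ u w : L, ρ (0, ⁅u, w⁆) = (⁅(ρ (0,u)).1, (ρ (0,w)).1⁆, ⁅(ρ (0,u)).2, (ρ (0,w)).2⁆) := by
    intro u w
    have := hbracket ((0 : L), u) ((0 : L), w)
    simpa using this
  let A : L →ₗ⁅ℝ⁆ L :=
    { toLinearMap := (LinearMap.fst ℝ L L) ∘ₗ ρ.toLinearMap ∘ₗ LinearMap.inl ℝ L L
      map_lie' := by intro u w; simpa using congrArg Prod.fst (hbl u w) }
  let B : L →ₗ⁅ℝ⁆ L :=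
    { toLinearMap := (LinearMap.snd ℝ L L) ∘ₗ ρ.toLinearMap ∘ₗ LinearMap.inl ℝ L L
      map_lie' := by intro u w; simpa using congrArg Prod.snd (hbl u w) }
  let C : L →ₗ⁅ℝ⁆ L :=
    { toLinearMap := (LinearMap.fst ℝ L L) ∘ₗ ρ.toLinearMap ∘ₗ LinearMap.inr ℝ L L
      map_lie' := by intro u w; simpa using congrArg Prod.fst (hbr u w) }
  let D : L →ₗ⁅ℝ⁆ L :=
    { toLinearMap := (LinearMap.snd ℝ L L) ∘ₗ ρ.toLinearMap ∘ₗ LinearMap.inr ℝ L L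
      map_lie' := by intro u w; simpa using congrArg Prod.snd (hbr u w) }
  have hAB : ∀ u : L, ρ (u, 0) = (A u, B u) := fun u => rfl
  have hCD : ∀ u : L, ρ (0, u) = (C u, D u) := fun u => rfl
  -- key equations
  have E1 : ∀ u : L, A u + C u = B u + D u := by
    intro u
    obtain ⟨y, hy⟩ := hdiag u
    have h' : ρ (u, 0) + ρ (0, u) = (y, y) := by
      rw [← map_add]
      simpa using hy
    rw [hAB, hCD] at h'
    have h1' : A u + C u = y := congrArg Prod.fst h'
    have h2' : B u + D u = y := congrArg Prod.snd h'
    rw [h1', h2']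
  have E2 : ∀ u : L, B u - (1 / lam) • D u = -(1 / lam') • (A u - (1 / lam) • C u) := by
    intro u
    obtain ⟨v, hv⟩ := hm u
    have h' : ρ (u, 0) + (-(1 / lam)) • ρ (0, u) = (v, -(1 / lam') • v) := by
      rw [← map_smul, ← map_add]
      simpa using hv
    rw [hAB, hCD] at h'
    have h1' : A u + (-(1 / lam)) • C u = v := congrArg Prod.fst h'
    have h2' : B u + (-(1 / lam)) • D u = -(1 / lam') • v := congrArg Prod.snd h'
    rw [← h1'] at h2'
    linear_combination (norm := module) h2'
  -- dichotomy for (A, B)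
  have dichAB : (∀ u, A u = 0) ∨ (∀ u, B u = 0) := by
    rcases aux_zero_or_inj B with hB | hB
    · right; exact hB
    · left
      intro u
      apply aux_central_eq_zero
      intro a
      set x := ρ.symm (a, 0) with hx
      have hρx : ρ x = (a, 0) := ρ.apply_symm_apply _
      have hb := hbracket x (u, 0)
      rw [hρx, hAB] at hb
      simp only at hb
      rw [lie_zero, zero_lie] at hb
      rw [hAB] at hb
      have hB2 : B ⁅x.1, u⁆ = 0 := congrArg Prod.snd hb
      have hs : ⁅x.1, u⁆ = (0 : L) := by
        apply hB
        rw [hB2]; simp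
      have hA2 : A ⁅x.1, u⁆ = ⁅a, A u⁆ := congrArg Prod.fst hb
      rw [hs] at hA2
      rw [← hA2]; simp
  -- dichotomy for (C, D)
  have dichCD : (∀ u, C u = 0) ∨ (∀ u, D u = 0) := by
    rcases aux_zero_or_inj D with hD | hD
    · right; exact hD
    · left
      intro u
      apply aux_central_eq_zero
      intro a
      set x := ρ.symm (a, 0) with hx
      have hρx : ρ x = (a, 0) := ρ.apply_symm_apply _
      have hb := hbracket x ((0 : L), u)
      rw [hρx, hCD] at hb
      simp only at hb
      rw [lie_zero, zero_lie] at hb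
      rw [hCD] at hb
      have hD2 : D ⁅x.2, u⁆ = 0 := congrArg Prod.snd hb
      have hs : ⁅x.2, u⁆ = (0 : L) := by
        apply hD
        rw [hD2]; simp
      have hC2 : C ⁅x.2, u⁆ = ⁅a, C u⁆ := congrArg Prod.fst hb
      rw [hs] at hC2
      rw [← hC2]; simp
  -- positivity facts
  have hl0 : (1 : ℝ) / lam ≠ 0 := by positivity
  have hll' : lam * lam' < 1 := by nlinarith
  -- in all cases, ρ (u, 0) = 0 for all u
  have key : ∀ u : L, ρ (u, 0) = 0 := by
    intro u
    rcases dichAB with hA | hB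
    · rcases dichCD with hC | hD
      · -- A = 0, C = 0 : D u = -B u, then (1 + 1/lam) B u = 0
        have e1 := E1 u; rw [hA, hC] at e1
        have hDu : D u = -B u := by
          have : (0 : L) = B u + D u := by simpa using e1
          linear_combination (norm := module) -this
        have e2 := E2 u; rw [hA, hC, hDu] at e2
        have hBu : B u = 0 := by
          have h2 : (1 + 1/lam) • B u = 0 := by
            linear_combination (norm := module) e2
          have hc : (1 : ℝ) + 1/lam ≠ 0 := by positivity
          exact (smul_eq_zero.mp h2).resolve_left hc
        rw [hAB, hA, hBu]; rfl
      · -- A = 0, D = 0 : C u = B u, then (1 - 1/(lam*lam')) B u = 0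
        have e1 := E1 u; rw [hA, hD] at e1
        have hCu : C u = B u := by simpa using e1
        have e2 := E2 u; rw [hA, hD, hCu] at e2
        have hBu : B u = 0 := by
          have h2 : (1 - (1/lam')*(1/lam)) • B u = 0 := by
            linear_combination (norm := module) e2
          have hc : (1 : ℝ) - (1/lam')*(1/lam) ≠ 0 := by
            intro h
            have hl : lam ≠ 0 := ne_of_gt h0
            have hl' : lam' ≠ 0 := ne_of_gt h0'
            field_simp at h
            nlinarith [hll']
          exact (smul_eq_zero.mp h2).resolve_left hc
        rw [hAB, hA, hBu]; rfl
    · rcases dichCD with hC | hD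
      · -- B = 0, C = 0 : A u = D u, then (1/lam - 1/lam') A u = 0
        have e1 := E1 u; rw [hB, hC] at e1
        have hDu : D u = A u := by simpa using e1.symm
        have e2 := E2 u; rw [hB, hC, hDu] at e2
        have hAu : A u = 0 := by
          have h2 : (1/lam' - 1/lam) • A u = 0 := by
            linear_combination (norm := module) e2
          have hc : (1:ℝ)/lam' - 1/lam ≠ 0 := by
            have : (1:ℝ)/lam' < 1/lam := by
              apply one_div_lt_one_div_of_lt h0 hlt
            linarith
          exact (smul_eq_zero.mp h2).resolve_left hc
        rw [hAB, hAu, hB]; rfl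
      · -- B = 0, D = 0 : C u = -A u, then (1/lam' + 1/(lam*lam')) A u = 0
        have e1 := E1 u; rw [hB, hD] at e1
        have hCu : C u = -A u := by
          have : A u + C u = 0 := by simpa using e1
          linear_combination (norm := module) this
        have e2 := E2 u; rw [hB, hD, hCu] at e2
        have hAu : A u = 0 := by
          have h2 : ((1/lam') + (1/lam') * (1/lam)) • A u = 0 := by
            linear_combination (norm := module) e2
          have hc : (1:ℝ)/lam' + (1/lam') * (1/lam) ≠ 0 := by positivity
          exact (smul_eq_zero.mp h2).resolve_left hc
        rw [hAB, hAu, hB]; rfl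
  have := key u₀
  have : (u₀, (0:L)) = (0 : L × L) := by
    apply ρ.injective
    rw [this, map_zero]
  exact hu₀ (congrArg Prod.fst this)
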